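/- arXiv:2010.08083 — 5 statements merged into one kernel-verified Lean document; each statement's English description precedes it below -/
import Mathlib

section
/- Let H→ be an acyclic orientation of a simple graph H with source set S, let S_p ⊊ S, and let T be a partial DAG tree decomposition with respect to S_p of width one. Let s ∈ S with s ∉ S_p, and suppose d ∈ S_p is an S_p-cover of s. Then the tree T′ obtained from T by adding the singleton bag {s} as a new leaf adjacent to the node {d} of T is a partial DAG tree decomposition with respect to S_p ∪ {s}, and T′ has width one. -/
/-- An acyclic orientation of a simple graph `H`: a relation `D` directing every
edge of `H` (and nothing else) with no directed cycle. -/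
structure GraphOrientation {V : Type} (H : SimpleGraph V) : Type where
  D : V → V → Prop
  adj_of_rel : ∀ u v, D u v → H.Adj u v
  rel_of_adj : ∀ u v, H.Adj u v → D u v ∨ D v u
  acyclic : ∀ v, ¬ Relation.TransGen D v v

namespace GraphOrientation

variable {V : Type} {H : SimpleGraph V}

/-- The set of sources of an acyclic orientation: vertices with no incoming edge. -/
def sources (O : GraphOrientation H) : Set V := {s | ∀ u, ¬ O.D u s}

/-- The set of vertices reachable from `s` by a directed path (including `s`). -/
def reach (O : GraphOrientation H) (s : V) : Set V := {v | Relation.ReflTransGen O.D s v}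

/-- The set of vertices reachable from some vertex of `B`. -/
def reachSet (O : GraphOrientation H) (B : Set V) : Set V := ⋃ s ∈ B, O.reach s

end GraphOrientation

/-- `tree` together with the bag assignment `bag` is a (partial) DAG tree
decomposition of the orientation `O` with respect to the vertex set `Sp`:
a finite tree whose bags are subsets of `Sp` whose union is `Sp`, such that
whenever a node `j` lies on the (unique) path between nodes `i` and `k`,
`reach(bag i) ∩ reach(bag k) ⊆ reach(bag j)`.
Taking `Sp = O.sources` gives the notion of a DAG tree decomposition of `O`. -/
def IsPDTD {V : Type} {H : SimpleGraph V} (O : GraphOrientation H) (Sp : Set V)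
    {ι : Type} (tree : SimpleGraph ι) (bag : ι → Set V) : Prop :=
  Finite ι ∧ tree.IsTree ∧ (∀ i, bag i ⊆ Sp) ∧ (⋃ i, bag i) = Sp ∧
    ∀ (i j k : ι) (p : tree.Walk i k), p.IsPath → j ∈ p.support →
      O.reachSet (bag i) ∩ O.reachSet (bag k) ⊆ O.reachSet (bag j)

/-- The width of a bag assignment: the maximum bag size. -/
noncomputable def bagWidth {V ι : Type} (bag : ι → Set V) : ℕ := ⨆ i, (bag i).ncard

/-- A width-one (partial) DAG tree decomposition: every bag is a singleton, and
distinct nodes carry distinct bags (so nodes may be identified with sources). -/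
def IsWidthOnePDTD {V : Type} {H : SimpleGraph V} (O : GraphOrientation H) (Sp : Set V)
    {ι : Type} (tree : SimpleGraph ι) (bag : ι → Set V) : Prop :=
  IsPDTD O Sp tree bag ∧ Function.Injective bag ∧ ∀ i, ∃ s : V, bag i = {s}

/-- `H` contains an induced cycle of length `n`. -/
def HasInducedCycleOfLength {V : Type} (H : SimpleGraph V) (n : ℕ) : Prop :=
  Nonempty (SimpleGraph.cycleGraph n ↪g H)

/-- The unique reachability graph of an orientation `O` over a set `Sp` of sources:
`s₁` and `s₂` are adjacent iff some vertex is reachable from both `s₁` and `s₂`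
but from no other member of `Sp`. -/
def URGraph {V : Type} {H : SimpleGraph V} (O : GraphOrientation H) (Sp : Set V) :
    SimpleGraph V where
  Adj s₁ s₂ := s₁ ∈ Sp ∧ s₂ ∈ Sp ∧ s₁ ≠ s₂ ∧
    ((O.reach s₁ ∩ O.reach s₂) \ O.reachSet (Sp \ {s₁, s₂})).Nonempty
  symm := by
    constructor
    rintro a b ⟨ha, hb, hab, hx⟩
    refine ⟨hb, ha, hab.symm, ?_⟩
    rwa [Set.inter_comm (O.reach b) (O.reach a), Set.pair_comm b a]
  loopless := by
    constructor
    rintro a ⟨-, -, h, -⟩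
    exact h rfl

/-- `(x, (tree, bag))` is a good pair: some leaf `ℓ` of the width-one decomposition,
with unique neighbour `d`, satisfies `reach x ∩ reach ℓ ⊆ reach d`. -/
def GoodPair {V : Type} {H : SimpleGraph V} (O : GraphOrientation H)
    {ι : Type} (tree : SimpleGraph ι) (bag : ι → Set V) (x : V) : Prop :=
  ∃ (i j : ι) (l d : V), tree.neighborSet i = {j} ∧ bag i = {l} ∧ bag j = {d} ∧
    O.reach x ∩ O.reach l ⊆ O.reach d

/-- The tree obtained from `tree` by attaching one new leaf (the `none` node)
adjacent to the node `i₀`. -/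
def extendTree {ι : Type} (tree : SimpleGraph ι) (i₀ : ι) : SimpleGraph (Option ι) where
  Adj a b :=
    (∃ i j, a = some i ∧ b = some j ∧ tree.Adj i j) ∨
      (a = none ∧ b = some i₀) ∨ (a = some i₀ ∧ b = none)
  symm := by
    constructor
    rintro a b (⟨i, j, rfl, rfl, h⟩ | ⟨rfl, rfl⟩ | ⟨rfl, rfl⟩)
    · exact Or.inl ⟨j, i, rfl, rfl, h.symm⟩
    · exact Or.inr (Or.inr ⟨rfl, rfl⟩)
    · exact Or.inr (Or.inl ⟨rfl, rfl⟩)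
  loopless := by
    constructor
    rintro a (⟨i, j, rfl, hj, h⟩ | ⟨rfl, hj⟩ | ⟨hi, hj⟩)
    · cases hj; exact tree.loopless.irrefl _ h
    · cases hj
    · rw [hi] at hj; cases hj

/-- The bag assignment extending `bag` by giving the new leaf (the `none` node)
the singleton bag `{s}`. -/
def extendBag {V ι : Type} (bag : ι → Set V) (s : V) : Option ι → Set V
  | none => {s}
  | some i => bag i


section Aux

open SimpleGraph

/-- The inclusion homomorphism. -/
def someHom {ι : Type} (tree : SimpleGraph ι) (i₀ : ι) : tree →g extendTree tree i₀ where
  toFun := some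
  map_rel' h := Or.inl ⟨_, _, rfl, rfl, h⟩

lemma adj_none_right {ι : Type} {tree : SimpleGraph ι} {i₀ : ι} {b : Option ι}
    (h : (extendTree tree i₀).Adj none b) : b = some i₀ := by
  rcases h with ⟨i, j, hi, hj, _⟩ | ⟨_, hb⟩ | ⟨hi, _⟩
  · exact absurd hi (by simp)
  · exact hb
  · exact absurd hi (by simp)

lemma adj_some_some {ι : Type} {tree : SimpleGraph ι} {i₀ : ι} {i m : ι}
    (h : (extendTree tree i₀).Adj (some i) (some m)) : tree.Adj i m := by
  rcases h with ⟨i', j', hi, hj, hadj⟩ | ⟨hi, _⟩ | ⟨_, hb⟩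
  · cases hi; cases hj; exact hadj
  · exact absurd hi (by simp)
  · exact absurd hb (by simp)

lemma shrink_walk {ι : Type} {tree : SimpleGraph ι} {i₀ : ι} :
    ∀ {a b : Option ι} (p : (extendTree tree i₀).Walk a b), none ∉ p.support →
    ∃ (i k : ι) (ha : a = some i) (hb : b = some k) (q : tree.Walk i k),
      p = (q.map (someHom tree i₀)).copy ha.symm hb.symm := by
  intro a b p
  induction p with
  | @nil a =>
    intro h
    cases a with
    | none => simp at h
    | some i => exact ⟨i, i, rfl, rfl, Walk.nil, rfl⟩
  | @cons a b' b h p' ih =>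
    intro hn
    rw [Walk.support_cons, List.mem_cons] at hn
    push_neg at hn
    obtain ⟨hne, hn'⟩ := hn
    obtain ⟨m, k, hb', hb, q, hq⟩ := ih hn'
    subst hb' hb
    match a, hne, h with
    | some i, _, h =>
      refine ⟨i, k, rfl, rfl, Walk.cons (adj_some_some h) q, ?_⟩
      rw [hq]; simp [Walk.map_cons, someHom]

lemma shrink_walk' {ι : Type} {tree : SimpleGraph ι} {i₀ : ι} {i k : ι}
    (p : (extendTree tree i₀).Walk (some i) (some k)) (hp : none ∉ p.support) :
    ∃ q : tree.Walk i k, p = q.map (someHom tree i₀) := by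
  obtain ⟨i', k', hi, hk, q, hq⟩ := shrink_walk p hp
  obtain rfl : i = i' := by injection hi
  obtain rfl : k = k' := by injection hk
  exact ⟨q, hq⟩

lemma mem_support_of_start_none {ι : Type} {tree : SimpleGraph ι} {i₀ : ι} {b : Option ι}
    (w : (extendTree tree i₀).Walk none b) (hb : b ≠ none) : some i₀ ∈ w.support := by
  cases w with
  | nil => exact absurd rfl hb
  | cons h p =>
    have := adj_none_right h
    subst this
    rw [Walk.support_cons]
    exact List.mem_cons_of_mem _ (Walk.start_mem_support p)

lemma not_none_mem_support {ι : Type} {tree : SimpleGraph ι} {i₀ : ι} {i k : ι}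
    (p : (extendTree tree i₀).Walk (some i) (some k)) (hp : p.IsPath) :
    none ∉ p.support := by
  classical
  intro h
  have hspec := p.take_spec h
  have h1 : some i₀ ∈ (p.dropUntil none h).support :=
    mem_support_of_start_none (p.dropUntil none h) (by simp)
  have h2 : some i₀ ∈ (p.takeUntil none h).support := by
    have := mem_support_of_start_none (p.takeUntil none h).reverse (by simp)
    rwa [Walk.support_reverse, List.mem_reverse] at this
  have hnd := hp.support_nodup
  rw [← hspec, Walk.support_append] at hnd
  have hdisj := List.disjoint_of_nodup_append hnd
  have h1' : some i₀ ∈ (p.dropUntil none h).support.tail := by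
    rw [Walk.support_eq_cons (p.dropUntil none h)] at h1
    rcases List.mem_cons.mp h1 with h1 | h1
    · exact absurd h1 (by simp)
    · exact h1
  exact hdisj h2 h1'

lemma no_cycle_at_none {ι : Type} {tree : SimpleGraph ι} {i₀ : ι}
    (c : (extendTree tree i₀).Walk none none) : ¬ c.IsCycle := by
  intro hc
  cases c with
  | nil => exact hc.ne_nil rfl
  | cons h q =>
    have hb := adj_none_right h
    subst hb
    have hnd : ((Walk.cons h q).edges).Nodup := hc.edges_nodup
    rw [Walk.edges_cons] at hnd
    have hmem : s(none, some i₀) ∈ q.edges := by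
      rw [← List.mem_reverse, ← Walk.edges_reverse]
      cases hq : q.reverse with
      | cons h' r =>
        have := adj_none_right h'
        subst this
        rw [Walk.edges_cons]
        exact List.mem_cons_self
    exact (List.nodup_cons.mp hnd).1 hmem

end Aux

/-- Let `T = (tree, bag)` be a width-one partial DAG tree
decomposition with respect to `Sp ⊊ S`, let `s ∈ S ∖ Sp`, and let `d ∈ Sp` be an
`Sp`-cover of `s` whose singleton bag sits at the node `i₀`.  Then attaching a new
leaf with bag `{s}` to the node `i₀` yields a partial DAG tree decomposition with
respect to `Sp ∪ {s}`, again of width one. -/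
theorem extend_pdtd_of_cover {V : Type} [Fintype V] (H : SimpleGraph V)
    (O : GraphOrientation H) (Sp : Set V) (hsub : Sp ⊂ O.sources)
    {ι : Type} (tree : SimpleGraph ι) (bag : ι → Set V)
    (hT : IsPDTD O Sp tree bag) (hw : bagWidth bag = 1)
    (s : V) (hs : s ∈ O.sources) (hsSp : s ∉ Sp)
    (d : V) (hd : d ∈ Sp)
    (hcover : ∀ s₂ ∈ Sp, O.reach s ∩ O.reach s₂ ⊆ O.reach d)
    (i₀ : ι) (hi₀ : bag i₀ = {d}) :
    IsPDTD O (Sp ∪ {s}) (extendTree tree i₀) (extendBag bag s) ∧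
      bagWidth (extendBag bag s) = 1 := by
  classical
  obtain ⟨hfin, htree, hbags, hunion, hcond⟩ := hT
  haveI := hfin
  haveI := Fintype.ofFinite ι
  haveI : Nonempty ι := htree.isConnected.nonempty
  have hinj : Function.Injective (someHom tree i₀) := fun a b h =>
    Option.some_injective _ h
  -- connectivity
  have hreach : ∀ a : Option ι, (extendTree tree i₀).Reachable a (some i₀) := by
    intro a
    cases a with
    | none =>
      exact SimpleGraph.Adj.reachable (Or.inr (Or.inl ⟨rfl, rfl⟩))
    | some i =>
      exact SimpleGraph.Reachable.map (someHom tree i₀) (htree.isConnected.preconnected i i₀)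
  have hconn : (extendTree tree i₀).Connected := by
    rw [SimpleGraph.connected_iff]
    exact ⟨fun a b => (hreach a).trans (hreach b).symm, ⟨none⟩⟩
  -- acyclicity
  have hacyc : (extendTree tree i₀).IsAcyclic := by
    intro v c hc
    by_cases hn : none ∈ c.support
    · exact no_cycle_at_none (c.rotate none hn) (hc.rotate hn)
    · match v, c, hn, hc with
      | none, c, hn, hc => exact hn (SimpleGraph.Walk.start_mem_support c)
      | some v', c, hn, hc =>
        obtain ⟨q, rfl⟩ := shrink_walk' c hn
        exact htree.IsAcyclic q
          ((SimpleGraph.Walk.map_isCycle_iff_of_injective hinj).mp hc)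
  -- bags are subsets
  have hsubs : ∀ o, extendBag bag s o ⊆ Sp ∪ {s} := by
    intro o
    cases o with
    | none => exact fun x hx => Or.inr hx
    | some i => exact fun x hx => Or.inl (hbags i hx)
  -- union of bags
  have hun : (⋃ o, extendBag bag s o) = Sp ∪ {s} := by
    rw [Set.iUnion_option]
    ext x
    simp only [Set.mem_union, Set.mem_iUnion]
    constructor
    · rintro (hx | ⟨i, hi⟩)
      · exact Or.inr hx
      · exact Or.inl (hunion ▸ Set.mem_iUnion.mpr ⟨i, hi⟩)
    · rintro (hx | hx)
      · rw [← hunion] at hx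
        obtain ⟨i, hi⟩ := Set.mem_iUnion.mp hx
        exact Or.inr ⟨i, hi⟩
      · exact Or.inl hx
  -- basic reach facts
  have hreachs : O.reachSet {s} = O.reach s := by
    simp [GraphOrientation.reachSet]
  have hreachd : O.reachSet (bag i₀) = O.reach d := by
    rw [hi₀]; simp [GraphOrientation.reachSet]
  have factA : ∀ B, B ⊆ Sp → O.reachSet {s} ∩ O.reachSet B ⊆ O.reachSet (bag i₀) := by
    intro B hB x hx
    obtain ⟨hx1, hx2⟩ := hx
    rw [hreachs] at hx1
    simp only [GraphOrientation.reachSet, Set.mem_iUnion] at hx2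
    obtain ⟨t, ht, hxt⟩ := hx2
    rw [hreachd]
    exact hcover t (hB ht) ⟨hx1, hxt⟩
  -- the key case: a path starting at the new leaf
  have caseNS : ∀ (k' j' : ι) (p : (extendTree tree i₀).Walk none (some k')),
      p.IsPath → some j' ∈ p.support →
      O.reachSet {s} ∩ O.reachSet (bag k') ⊆ O.reachSet (bag j') := by
    intro k' j' p hp hj
    cases p with
    | cons h q' =>
      have hb := adj_none_right h
      subst hb
      have hq'path : q'.IsPath := hp.of_cons
      have hnone : none ∉ q'.support := by
        have hnd := hp.support_nodup
        rw [SimpleGraph.Walk.support_cons] at hnd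
        exact (List.nodup_cons.mp hnd).1
      obtain ⟨q, rfl⟩ := shrink_walk' q' hnone
      have hqpath : q.IsPath :=
        (SimpleGraph.Walk.map_isPath_iff_of_injective hinj).mp hq'path
      have hjq : j' ∈ q.support := by
        erw [SimpleGraph.Walk.support_cons] at hj
        rcases List.mem_cons.mp hj with h1 | h1
        · exact absurd h1 (by simp)
        · erw [SimpleGraph.Walk.support_map] at h1
          obtain ⟨j'', hj'', he⟩ := List.mem_map.mp h1
          obtain rfl : j'' = j' := Option.some_injective _ he
          exact hj''
      intro x hx
      exact hcond i₀ j' k' q hqpath hjq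
        ⟨factA (bag k') (hbags k') hx, hx.2⟩
  -- the path condition
  have hcond' : ∀ (i j k : Option ι) (p : (extendTree tree i₀).Walk i k), p.IsPath →
      j ∈ p.support →
      O.reachSet (extendBag bag s i) ∩ O.reachSet (extendBag bag s k) ⊆
        O.reachSet (extendBag bag s j) := by
    intro i j k p hp hj
    cases j with
    | none =>
      have hik : i = none ∨ k = none := by
        by_contra hcon
        push_neg at hcon
        obtain ⟨hi, hk⟩ := hcon
        match i, k, p, hi, hk, hp, hj with
        | some i', some k', p, _, _, hp, hj =>
          exact not_none_mem_support p hp hj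
      rcases hik with rfl | rfl
      · exact Set.inter_subset_left
      · exact Set.inter_subset_right
    | some j' =>
      match i, k, p, hp, hj with
      | none, none, p, hp, hj =>
        exfalso
        cases p with
        | nil => simp at hj
        | cons h q =>
          have hb := adj_none_right h
          subst hb
          have hnd := hp.support_nodup
          rw [SimpleGraph.Walk.support_cons] at hnd
          exact (List.nodup_cons.mp hnd).1 (SimpleGraph.Walk.end_mem_support q)
      | none, some k', p, hp, hj =>
        exact caseNS k' j' p hp hj
      | some i', none, p, hp, hj =>
        rw [Set.inter_comm]
        exact caseNS i' j' p.reverse hp.reverse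
          (by rw [SimpleGraph.Walk.support_reverse, List.mem_reverse]; exact hj)
      | some i', some k', p, hp, hj =>
        obtain ⟨q, rfl⟩ := shrink_walk' p (not_none_mem_support p hp)
        have hqpath : q.IsPath :=
          (SimpleGraph.Walk.map_isPath_iff_of_injective hinj).mp hp
        have hjq : j' ∈ q.support := by
          erw [SimpleGraph.Walk.support_map] at hj
          obtain ⟨j'', hj'', he⟩ := List.mem_map.mp hj
          obtain rfl : j'' = j' := Option.some_injective _ he
          exact hj''
        exact hcond i' j' k' q hqpath hjq
  refine ⟨⟨inferInstance, ⟨hconn, hacyc⟩, hsubs, hun, hcond'⟩, ?_⟩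
  -- width
  have hub : ∀ i, (bag i).ncard ≤ 1 := by
    intro i
    have h2 : (bag i).ncard ≤ ⨆ i, (bag i).ncard :=
      le_ciSup (Set.Finite.bddAbove (Set.finite_range fun i => (bag i).ncard)) i
    rwa [show (⨆ i, (bag i).ncard) = 1 from hw] at h2
  unfold bagWidth
  apply le_antisymm
  · apply ciSup_le
    intro o
    cases o with
    | none => simp [extendBag]
    | some i => exact hub i
  · have h1 := le_ciSup
      (Set.Finite.bddAbove (Set.finite_range fun o => (extendBag bag s o).ncard))
      (none : Option ι)
    simpa [extendBag] using h1
end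

section
/- Let H→ be an acyclic orientation of a simple graph H with source set S, let S′ ⊆ S with |S′| ≥ 3, and suppose every non-empty proper subset of S′ admits a width-one partial DAG tree decomposition. If there exist x ∈ S′ and a width-one partial DAG tree decomposition T of S′ ∖ {x} such that (x, T) is a good pair, then S′ admits a width-one partial DAG tree decomposition. -/
open SimpleGraph

namespace PDTDAuxx

variable {κ : Type} (G : SimpleGraph κ) (m : κ)

def addLeaf : SimpleGraph (Option κ) where
  Adj a b := match a, b with
    | some a, some b => G.Adj a b
    | none, some b => b = m
    | some a, none => a = m
    | none, none => False
  symm := by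
    constructor
    rintro (_ | a) (_ | b) h
    · exact h
    · exact h
    · exact h
    · exact h.symm
  loopless := by
    constructor
    rintro (_ | a) h
    · exact h
    · exact G.loopless.irrefl a h

variable {G m}

lemma addLeaf_adj_some_some {a b : κ} : (addLeaf G m).Adj (some a) (some b) ↔ G.Adj a b :=
  Iff.rfl

lemma addLeaf_adj_none {b : Option κ} : (addLeaf G m).Adj none b ↔ b = some m := by
  cases b <;> simp [addLeaf]

variable (G m)

def addLeafHom : G →g addLeaf G m := ⟨some, fun {a b} h => h⟩

variable {G m}

theorem addLeaf_demote_aux {u v : Option κ} (p : (addLeaf G m).Walk u v)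
    (hn : none ∉ p.support) {a b : κ} (hu : u = some a) (hv : v = some b) :
    ∃ q : G.Walk a b, p.copy hu hv = q.map (addLeafHom G m) := by
  induction p generalizing a b with
  | nil =>
    subst hu
    obtain rfl : a = b := Option.some_injective _ hv
    exact ⟨.nil, by simp; rfl⟩
  | @cons u' w' v' h p ih =>
    subst hu
    rw [Walk.support_cons, List.mem_cons] at hn
    push_neg at hn
    have hw : w' ≠ none := fun hw => hn.2 (hw ▸ p.start_mem_support)
    obtain ⟨w, rfl⟩ := Option.ne_none_iff_exists'.mp hw
    obtain ⟨q, hq⟩ := ih hn.2 rfl hv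
    refine ⟨.cons h q, ?_⟩
    rw [Walk.copy_cons, hq]
    rfl

theorem addLeaf_demote {a b : κ} (p : (addLeaf G m).Walk (some a) (some b))
    (hn : none ∉ p.support) : ∃ q : G.Walk a b, p = q.map (addLeafHom G m) := by
  simpa using addLeaf_demote_aux p hn rfl rfl

lemma loop_path_eq_nil {α : Type} {G : SimpleGraph α} {u : α} (p : G.Walk u u)
    (hp : p.IsPath) : p = .nil := by
  cases p with
  | nil => rfl
  | cons h q =>
    rw [Walk.cons_isPath_iff] at hp
    exact absurd q.end_mem_support hp.2

lemma addLeaf_second {v : Option κ} (p : (addLeaf G m).Walk none v) (h : ¬ p.Nil) :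
    some m ∈ p.support.tail := by
  cases p with
  | nil => simp at h
  | cons hadj q =>
    obtain rfl := addLeaf_adj_none.mp hadj
    simpa using q.start_mem_support

lemma addLeaf_none_not_mem_support {a b : κ} (p : (addLeaf G m).Walk (some a) (some b))
    (hp : p.IsPath) : none ∉ p.support := by
  classical
  intro hn
  have hspec := p.take_spec hn
  have hsup : p.support = (p.takeUntil none hn).support ++ (p.dropUntil none hn).support.tail := by
    conv_lhs => rw [← hspec]
    rw [Walk.support_append]
  have hnd := hp.support_nodup
  rw [hsup, List.nodup_append] at hnd
  have h1 : some m ∈ (p.takeUntil none hn).support := by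
    have hq' : ¬ (p.takeUntil none hn).reverse.Nil :=
      Walk.not_nil_of_ne (by simp)
    have h2 := addLeaf_second _ hq'
    have h3 : some m ∈ (p.takeUntil none hn).reverse.support := List.mem_of_mem_tail h2
    rwa [Walk.support_reverse, List.mem_reverse] at h3
  have h2 : some m ∈ (p.dropUntil none hn).support.tail :=
    addLeaf_second _ (Walk.not_nil_of_ne (by simp))
  exact hnd.2.2 _ h1 _ h2 rfl

lemma addLeaf_no_cycle_at_none (c : (addLeaf G m).Walk none none) : ¬ c.IsCycle := by
  intro hc
  cases c with
  | nil => exact hc.ne_nil rfl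
  | cons h q =>
    obtain rfl := addLeaf_adj_none.mp h
    have hq : q.IsPath := ((Walk.cons_isCycle_iff q h).mp hc).1
    have h3 := hc.three_le_length
    rw [Walk.length_cons] at h3
    have hqr : q.reverse.IsPath := hq.reverse
    obtain ⟨q', hq'⟩ : ∃ q' : (addLeaf G m).Walk none (some m), q' = q.reverse := ⟨_, rfl⟩
    have hlen : q'.length = q.length := by rw [hq', Walk.length_reverse]
    rw [← hq'] at hqr
    cases q' with
    | cons h2 r =>
      obtain rfl := addLeaf_adj_none.mp h2
      rw [Walk.cons_isPath_iff] at hqr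
      have hr := loop_path_eq_nil r hqr.1
      subst hr
      simp [← hlen] at h3

lemma addLeaf_isAcyclic (hG : G.IsAcyclic) : (addLeaf G m).IsAcyclic := by
  classical
  intro v c hc
  by_cases hn : none ∈ c.support
  · exact addLeaf_no_cycle_at_none _ (hc.rotate hn)
  · have hv : v ≠ none := fun h => hn (h ▸ c.start_mem_support)
    obtain ⟨a, rfl⟩ := Option.ne_none_iff_exists'.mp hv
    obtain ⟨q, hq⟩ := addLeaf_demote c hn
    rw [hq] at hc
    exact hG _ ((Walk.map_isCycle_iff_of_injective (Option.some_injective κ)).mp hc)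

lemma addLeaf_connected (hG : G.Connected) : (addLeaf G m).Connected := by
  have key : ∀ u : Option κ, (addLeaf G m).Reachable u (some m) := by
    rintro (_ | a)
    · exact Adj.reachable (addLeaf_adj_none.mpr rfl)
    · exact (hG.preconnected a m).map (addLeafHom G m)
  rw [connected_iff]
  exact ⟨fun u v => (key u).trans (key v).symm, ⟨none⟩⟩

lemma addLeaf_isTree (hG : G.IsTree) : (addLeaf G m).IsTree :=
  ⟨addLeaf_connected hG.isConnected, addLeaf_isAcyclic hG.IsAcyclic⟩

end PDTDAuxx

open PDTDAuxx SimpleGraph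

/-- Let `S'` be a set of sources of an acyclic orientation with
`|S'| ≥ 3` such that every non-empty proper subset of `S'` admits a width-one
partial DAG tree decomposition.  If for some `x ∈ S'` there is a width-one partial
DAG tree decomposition `T` of `S' ∖ {x}` such that `(x, T)` is a good pair, then
`S'` admits a width-one partial DAG tree decomposition. -/


theorem pdtd_of_goodPair {V : Type} [Fintype V] (H : SimpleGraph V)
    (O : GraphOrientation H) (S' : Set V) (hS' : S' ⊆ O.sources) (h3 : 3 ≤ S'.ncard)
    (hind : ∀ Sp : Set V, Sp ⊆ S' → Sp.Nonempty → Sp ≠ S' →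
      ∃ (κ : Type) (tr : SimpleGraph κ) (bg : κ → Set V), IsWidthOnePDTD O Sp tr bg)
    (x : V) (hx : x ∈ S')
    {ι : Type} (tree : SimpleGraph ι) (bag : ι → Set V)
    (hT : IsWidthOnePDTD O (S' \ {x}) tree bag)
    (hgood : GoodPair O tree bag x) :
    ∃ (κ : Type) (tr : SimpleGraph κ) (bg : κ → Set V), IsWidthOnePDTD O S' tr bg := by
    classical
  obtain ⟨⟨hfinT, htreeT, hbagsubT, hbagunionT, hcondT⟩, hinjT, hsingT⟩ := hT
  obtain ⟨i0, j0, l, d, hns, hbagi0, hbagj0, hgd⟩ := hgood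
  have reachSet_singleton : ∀ a : V, O.reachSet {a} = O.reach a := fun a => by
    simp [GraphOrientation.reachSet]
  have hadj0 : tree.Adj i0 j0 := by
    have h : j0 ∈ tree.neighborSet i0 := by rw [hns]; exact rfl
    exact h
  have hij : i0 ≠ j0 := fun h => tree.loopless.irrefl _ (h ▸ hadj0)
  have hld : l ≠ d := fun h => hij (hinjT (by rw [hbagi0, hbagj0, h]))
  have hlS : l ∈ S' \ {x} := hbagsubT i0 (hbagi0 ▸ rfl)
  have hdS : d ∈ S' \ {x} := hbagsubT j0 (hbagj0 ▸ rfl)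
  have hlx : l ≠ x := fun h => hlS.2 h
  have hlS' : l ∈ S' := hlS.1
  -- key fact
  have hkey : ∀ s ∈ S' \ {l}, O.reach l ∩ O.reach s ⊆ O.reach d := by
    rintro s ⟨hsS, hsl⟩
    have hsl : s ≠ l := hsl
    by_cases hsx : s = x
    · subst hsx
      intro v hv
      exact hgd ⟨hv.2, hv.1⟩
    · have hs' : s ∈ ⋃ i, bag i := by rw [hbagunionT]; exact ⟨hsS, hsx⟩
      obtain ⟨k, hk⟩ := Set.mem_iUnion.mp hs'
      obtain ⟨s', hs'eq⟩ := hsingT k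
      rw [hs'eq] at hk
      obtain rfl : s = s' := hk
      have hki0 : k ≠ i0 := by
        intro h
        subst h
        rw [hbagi0] at hs'eq
        exact hsl (by simpa using hs'eq.symm)
      obtain ⟨w⟩ := htreeT.isConnected.preconnected i0 k
      obtain ⟨q, hqp⟩ : ∃ q : tree.Walk i0 k, q.IsPath := ⟨w.toPath.1, w.toPath.2⟩
      cases q with
      | nil => exact absurd rfl hki0.symm
      | @cons _ c _ hadj r =>
        obtain rfl : c = j0 := by
          have h2 : c ∈ tree.neighborSet i0 := hadj
          rw [hns] at h2
          exact h2
        have hsub := hcondT i0 c k (.cons hadj r) hqp (by rw [Walk.support_cons]; exact List.mem_cons_of_mem _ r.start_mem_support)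
        rw [hbagi0, hbagj0, hs'eq, reachSet_singleton, reachSet_singleton,
          reachSet_singleton] at hsub
        exact hsub
  -- width-one PDTD of S' \ {l}
  obtain ⟨κ, tr, bg, hT2⟩ := hind (S' \ {l}) Set.diff_subset
    ⟨x, hx, fun h => hlx (Set.mem_singleton_iff.mp h).symm⟩
    (by
      intro h
      rw [← h] at hlS'
      exact hlS'.2 rfl)
  obtain ⟨⟨hfin2, htree2, hsub2, hunion2, hcond2⟩, hinj2, hsing2⟩ := hT2
  have hd2 : d ∈ ⋃ i, bg i := by
    rw [hunion2]
    exact ⟨hdS.1, fun h => hld (Set.mem_singleton_iff.mp h).symm⟩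
  obtain ⟨m, hm⟩ := Set.mem_iUnion.mp hd2
  obtain ⟨d', hd'⟩ := hsing2 m
  rw [hd'] at hm
  obtain rfl : d = d' := hm
  refine ⟨Option κ, addLeaf tr m, fun o => o.elim {l} bg, ?_⟩
  have helim_none : (Option.elim none ({l} : Set V) bg) = {l} := rfl
  have helim_some : ∀ a : κ, (Option.elim (some a) ({l} : Set V) bg) = bg a :=
    fun _ => rfl
  have case1 : ∀ (b : κ) (j : Option κ) (p : (addLeaf tr m).Walk none (some b)),
      p.IsPath → j ∈ p.support →
      O.reach l ∩ O.reachSet (bg b) ⊆ O.reachSet (j.elim {l} bg) := by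
    intro b j p hp hj
    cases p with
    | @cons _ c _ hadj q =>
      obtain rfl : c = some m := addLeaf_adj_none.mp hadj
      rw [Walk.cons_isPath_iff] at hp
      rw [Walk.support_cons, List.mem_cons] at hj
      rcases hj with rfl | hj
      · rw [helim_none, reachSet_singleton]
        exact Set.inter_subset_left
      · have hjn : j ≠ none := fun h => hp.2 (h ▸ hj)
        obtain ⟨j', rfl⟩ := Option.ne_none_iff_exists'.mp hjn
        obtain ⟨q', hq'⟩ := addLeaf_demote q hp.2
        have hq'p : q'.IsPath :=
          (Walk.map_isPath_iff_of_injective (Option.some_injective κ)).mp (hq' ▸ hp.1)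
        have hj' : j' ∈ q'.support := by
          rw [hq'] at hj
          replace hj : some j' ∈ q'.support.map (addLeafHom tr m) := by rw [← Walk.support_map]; exact hj
          obtain ⟨j'', hj'', heq⟩ := List.mem_map.mp hj
          obtain rfl : j'' = j' := Option.some_injective κ heq
          exact hj''
        have hsub := hcond2 m j' b q' hq'p hj'
        obtain ⟨sb, hsb⟩ := hsing2 b
        have hsbS : sb ∈ S' \ {l} := hsub2 b (hsb ▸ rfl)
        rw [helim_some]
        intro v hv
        refine hsub ⟨?_, hv.2⟩
        rw [hd', reachSet_singleton]
        refine hkey sb hsbS ⟨hv.1, ?_⟩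
        have := hv.2
        rwa [hsb, reachSet_singleton] at this
  refine ⟨⟨?_, ?_, ?_, ?_, ?_⟩, ?_, ?_⟩
  · haveI := hfin2
    haveI := Fintype.ofFinite κ
    exact Finite.of_fintype _
  · exact addLeaf_isTree htree2
  · rintro (_ | a)
    · exact Set.singleton_subset_iff.mpr hlS'
    · exact (hsub2 a).trans Set.diff_subset
  · rw [Set.iUnion_option]
    show ({l} : Set V) ∪ ⋃ i, bg i = S'
    rw [hunion2, Set.singleton_union, Set.insert_diff_singleton, Set.insert_eq_self.mpr hlS']
  · rintro (_ | a) j (_ | b) p hp hj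
    · -- none to none
      have hnil := loop_path_eq_nil p hp
      rw [hnil] at hj
      simp only [Walk.support_nil, List.mem_singleton] at hj
      subst hj
      exact Set.inter_subset_left
    · -- none to some b
      intro v hv
      have hv1 : v ∈ O.reachSet {l} := hv.1
      rw [reachSet_singleton] at hv1
      exact case1 b j p hp hj ⟨hv1, hv.2⟩
    · -- some a to none
      have hp' := hp.reverse
      have hj' : j ∈ p.reverse.support := by
        rw [Walk.support_reverse, List.mem_reverse]
        exact hj
      intro v hv
      have hv2 : v ∈ O.reachSet {l} := hv.2
      rw [reachSet_singleton] at hv2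
      exact case1 a j p.reverse hp' hj' ⟨hv2, hv.1⟩
    · -- some a to some b
      have hn := addLeaf_none_not_mem_support p hp
      have hjn : j ≠ none := fun h => hn (h ▸ hj)
      obtain ⟨j', rfl⟩ := Option.ne_none_iff_exists'.mp hjn
      obtain ⟨q, hq⟩ := addLeaf_demote p hn
      have hqp : q.IsPath :=
        (Walk.map_isPath_iff_of_injective (Option.some_injective κ)).mp (hq ▸ hp)
      have hj' : j' ∈ q.support := by
        rw [hq] at hj
        replace hj : some j' ∈ q.support.map (addLeafHom tr m) := by rw [← Walk.support_map]; exact hj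
        obtain ⟨j'', hj'', heq⟩ := List.mem_map.mp hj
        obtain rfl : j'' = j' := Option.some_injective κ heq
        exact hj''
      exact hcond2 a j' b q hqp hj'
  · rintro (_ | a) (_ | b) h
    · rfl
    · exfalso
      have h' : ({l} : Set V) = bg b := h
      have hlb : l ∈ bg b := h' ▸ rfl
      exact (hsub2 b hlb).2 rfl
    · exfalso
      have h' : bg a = ({l} : Set V) := h
      have hlb : l ∈ bg a := h'.symm ▸ rfl
      exact (hsub2 a hlb).2 rfl
    · rw [hinj2 h]
  · rintro (_ | a)
    · exact ⟨l, rfl⟩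
    · exact hsing2 a
end

section
/- Let H→ be an acyclic orientation of a simple graph H with source set S, let x ∈ S with |S ∖ {x}| ≥ 2, and let T be a width-one partial DAG tree decomposition with respect to S ∖ {x}. If (x, T) is not a good pair — i.e., for every leaf node ℓ of T with unique neighbor d in T, d is not an intersection-cover of x and ℓ — then the degree of x in the unique reachability graph UR_S is at least 2. -/
lemma tree_two_leaves {ι : Type} [Fintype ι] (tree : SimpleGraph ι) [DecidableRel tree.Adj]
    (ht : tree.IsTree) (h : 1 < Fintype.card ι) :
    ∃ i₁ i₂ : ι, i₁ ≠ i₂ ∧ tree.degree i₁ = 1 ∧ tree.degree i₂ = 1 := by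
  classical
  have hdeg : ∀ v : ι, 1 ≤ tree.degree v := by
    intro v
    obtain ⟨w, hw⟩ := Fintype.exists_ne_of_one_lt_card h v
    obtain ⟨p⟩ := ht.isConnected.preconnected v w
    rw [Nat.succ_le_iff, SimpleGraph.degree_pos_iff_exists_adj]
    cases p with
    | nil => exact absurd rfl hw.symm
    | cons hadj q => exact ⟨_, hadj⟩
  have hsum : ∑ v, tree.degree v = 2 * (Fintype.card ι - 1) := by
    rw [SimpleGraph.sum_degrees_eq_twice_card_edges]
    have := ht.card_edgeFinset
    omega
  set A := Finset.univ.filter (fun v => tree.degree v = 1) with hA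
  set B := Finset.univ.filter (fun v => ¬ tree.degree v = 1) with hB
  have hsA : ∑ v ∈ A, tree.degree v = A.card * 1 := by
    rw [Finset.sum_eq_card_nsmul (fun a ha => (Finset.mem_filter.1 ha).2)]
    simp [hA]
  have hsB : B.card * 2 ≤ ∑ v ∈ B, tree.degree v := by
    have := Finset.card_nsmul_le_sum B (fun v => tree.degree v) 2
      (fun v hv => by have h1 := hdeg v; have h2 := (Finset.mem_filter.1 hv).2; show 2 ≤ tree.degree v; omega)
    simpa using this
  have hcards : A.card + B.card = Fintype.card ι := by
    rw [hA, hB]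
    simpa using Finset.card_filter_add_card_filter_not
      (s := (Finset.univ : Finset ι)) (p := fun v => tree.degree v = 1)
  have hsplit : ∑ v ∈ A, tree.degree v + ∑ v ∈ B, tree.degree v = ∑ v, tree.degree v :=
    Finset.sum_filter_add_sum_filter_not Finset.univ _ _
  have hAcard : 1 < A.card := by omega
  obtain ⟨a, ha, b, hb, hab⟩ := Finset.one_lt_card.1 hAcard
  exact ⟨a, b, hab, (Finset.mem_filter.1 ha).2, (Finset.mem_filter.1 hb).2⟩

lemma reachSet_singleton {V : Type} {H : SimpleGraph V} (O : GraphOrientation H) (s : V) :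
    O.reachSet {s} = O.reach s := by
  simp [GraphOrientation.reachSet]

/-- Let `x` be a source with `|S ∖ {x}| ≥ 2` and let `T` be a
width-one partial DAG tree decomposition with respect to `S ∖ {x}`, where `S` is
the source set.  If `(x, T)` is not a good pair, then `x` has degree at least 2 in
the unique reachability graph over `S`. -/
theorem degree_ge_two_of_not_goodPair {V : Type} [Fintype V] (H : SimpleGraph V)
    (O : GraphOrientation H) (x : V) (hx : x ∈ O.sources)
    (h2 : 2 ≤ (O.sources \ {x}).ncard)
    {ι : Type} (tree : SimpleGraph ι) (bag : ι → Set V)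
    (hT : IsWidthOnePDTD O (O.sources \ {x}) tree bag)
    (hng : ¬ GoodPair O tree bag x) :
    2 ≤ ((URGraph O O.sources).neighborSet x).ncard := by
  classical
  obtain ⟨⟨hfin, htree, hsub, hcov, hpath⟩, hinj, hsing⟩ := hT
  haveI : Fintype ι := @Fintype.ofFinite ι hfin
  haveI : DecidableRel tree.Adj := Classical.decRel _
  have node : ∀ s ∈ O.sources \ {x}, ∃ i, bag i = {s} := by
    intro s hs
    rw [← hcov] at hs
    obtain ⟨i, hi⟩ := Set.mem_iUnion.1 hs
    obtain ⟨t, ht⟩ := hsing i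
    rw [ht] at hi
    exact ⟨i, by rw [ht, Set.mem_singleton_iff.1 hi]⟩
  have hSfin : (O.sources \ {x}).Finite := Set.toFinite _
  obtain ⟨s₁, hs₁, s₂, hs₂, hs12⟩ := (Set.one_lt_ncard hSfin).1 (by omega)
  obtain ⟨i₁', hi₁'⟩ := node s₁ hs₁
  obtain ⟨i₂', hi₂'⟩ := node s₂ hs₂
  have hcard : 1 < Fintype.card ι := by
    rw [Fintype.one_lt_card_iff_nontrivial]
    refine ⟨⟨i₁', i₂', fun e => hs12 ?_⟩⟩
    rw [e, hi₂'] at hi₁'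
    exact (Set.singleton_eq_singleton_iff.1 hi₁').symm
  -- key: every leaf gives a UR-neighbour of x
  have key : ∀ (i j : ι) (l : V), tree.neighborSet i = {j} → bag i = {l} →
      (URGraph O O.sources).Adj x l := by
    intro i j l hnb hbl
    obtain ⟨d, hbd⟩ := hsing j
    have hns : ¬ (O.reach x ∩ O.reach l ⊆ O.reach d) := fun hsub' =>
      hng ⟨i, j, l, d, hnb, hbl, hbd, hsub'⟩
    obtain ⟨v, hv, hvd⟩ := Set.not_subset.1 hns
    have hlS : l ∈ O.sources \ {x} := hsub i (by rw [hbl]; exact Set.mem_singleton l)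
    refine ⟨hx, hlS.1, Ne.symm (Set.mem_singleton_iff.not.1 hlS.2), v, ⟨hv.1, hv.2⟩, ?_⟩
    intro hvR
    obtain ⟨s, hsmem, hvs⟩ := Set.mem_iUnion₂.1 hvR
    have hsS : s ∈ O.sources := hsmem.1
    have hsx : s ≠ x := fun e => hsmem.2 (by simp [e])
    have hsl : s ≠ l := fun e => hsmem.2 (by simp [e])
    obtain ⟨k, hbk⟩ := node s ⟨hsS, by simpa using hsx⟩
    have hik : i ≠ k := by
      intro e
      rw [← e, hbl] at hbk
      exact hsl (Set.singleton_eq_singleton_iff.1 hbk).symm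
    obtain ⟨p, hp⟩ := (htree.existsUnique_path i k).exists
    cases p with
    | nil => exact hik rfl
    | @cons _ w _ hadj q =>
      have hw : w ∈ tree.neighborSet i := hadj
      rw [hnb, Set.mem_singleton_iff] at hw
      have hj : j ∈ (SimpleGraph.Walk.cons hadj q).support := by
        rw [SimpleGraph.Walk.support_cons]
        exact List.mem_cons_of_mem _ (hw ▸ q.start_mem_support)
      have hsub2 := hpath i j k (SimpleGraph.Walk.cons hadj q) hp hj
      have hvj : v ∈ O.reachSet (bag j) := by
        refine hsub2 ⟨?_, ?_⟩
        · rw [hbl, reachSet_singleton]; exact hv.2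
        · rw [hbk, reachSet_singleton]; exact hvs
      rw [hbd, reachSet_singleton] at hvj
      exact hvd hvj
  obtain ⟨i₁, i₂, hne, hd₁, hd₂⟩ := tree_two_leaves tree htree hcard
  have leaf : ∀ i : ι, tree.degree i = 1 → ∃ j, tree.neighborSet i = {j} := by
    intro i hi
    obtain ⟨j, hj⟩ := Finset.card_eq_one.1 hi
    refine ⟨j, ?_⟩
    ext w
    rw [SimpleGraph.mem_neighborSet, ← SimpleGraph.mem_neighborFinset, hj]
    simp
  obtain ⟨j₁, hj₁⟩ := leaf i₁ hd₁
  obtain ⟨j₂, hj₂⟩ := leaf i₂ hd₂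
  obtain ⟨l₁, hl₁⟩ := hsing i₁
  obtain ⟨l₂, hl₂⟩ := hsing i₂
  have hl12 : l₁ ≠ l₂ := by
    intro e
    apply hne
    apply hinj
    rw [hl₁, hl₂, e]
  have ha₁ := key i₁ j₁ l₁ hj₁ hl₁
  have ha₂ := key i₂ j₂ l₂ hj₂ hl₂
  have hfin2 : ((URGraph O O.sources).neighborSet x).Finite := Set.toFinite _
  exact (Set.one_lt_ncard hfin2).2 ⟨l₁, ha₁, l₂, ha₂, hl12⟩
end

section
/- Let H→ be an acyclic orientation of a simple graph H with source set S. If the unique reachability graph UR_S contains a triangle (three pairwise adjacent vertices), then dtw(H→) ≥ 2; that is, every DAG tree decomposition of H→ has width at least 2. -/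
/-- Along a walk, if a predicate holds at the start and fails at the end, some
edge of the walk goes from a vertex satisfying it to one failing it. -/
lemma exists_edge_of_prop {ι : Type} {G : SimpleGraph ι} {u v : ι}
    (w : G.Walk u v) (Q : ι → Prop) (hu : Q u) (hv : ¬ Q v) :
    ∃ a b, Q a ∧ ¬ Q b ∧ s(a, b) ∈ w.edges := by
  induction w with
  | nil => exact absurd hu hv
  | @cons u c v h w ih =>
    by_cases hc : Q c
    · obtain ⟨a, b, hQa, hQb, hmem⟩ := ih hc hv
      exact ⟨a, b, hQa, hQb, List.mem_cons_of_mem _ hmem⟩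
    · exact ⟨u, c, hu, hc, by simp [SimpleGraph.Walk.edges_cons]⟩

/-- If the unique reachability graph over the full source set of an
acyclic orientation of `H` contains a triangle, then every DAG tree decomposition
of this orientation has width at least 2 (i.e. `dtw(H→) ≥ 2`). -/
theorem dtw_ge_two_of_urGraph_triangle {V : Type} [Fintype V] (H : SimpleGraph V)
    (O : GraphOrientation H) (s₁ s₂ s₃ : V)
    (h12 : (URGraph O O.sources).Adj s₁ s₂)
    (h23 : (URGraph O O.sources).Adj s₂ s₃)
    (h13 : (URGraph O O.sources).Adj s₁ s₃) :
    ∀ (ι : Type) (tree : SimpleGraph ι) (bag : ι → Set V),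
      IsPDTD O O.sources tree bag → 2 ≤ bagWidth bag := by
  classical
  intro ι tree bag hpd
  obtain ⟨hfin, htree, hsub, hunion, hcond⟩ := hpd
  by_contra hlt
  push_neg at hlt
  have hbdd : BddAbove (Set.range fun i => (bag i).ncard) :=
    (Set.finite_range _).bddAbove
  have hsmall : ∀ i, (bag i).ncard ≤ 1 := by
    intro i
    have h := le_ciSup hbdd i
    have : (bag i).ncard ≤ bagWidth bag := h
    omega
  obtain ⟨hs1, hs2, hne12, hw12⟩ := h12
  obtain ⟨_, hs3, hne23, hw23⟩ := h23
  obtain ⟨_, _, hne13, hw13⟩ := h13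
  -- each source lies in a singleton bag
  have hmem : ∀ s ∈ O.sources, ∃ i, bag i = {s} := by
    intro s hs
    have hsu : s ∈ ⋃ i, bag i := hunion ▸ hs
    obtain ⟨i, hi⟩ := Set.mem_iUnion.mp hsu
    refine ⟨i, ?_⟩
    have hpos : 0 < (bag i).ncard := (Set.ncard_pos (Set.toFinite _)).mpr ⟨s, hi⟩
    have h1 : (bag i).ncard = 1 := le_antisymm (hsmall i) hpos
    obtain ⟨a, ha⟩ := Set.ncard_eq_one.mp h1
    rw [ha] at hi ⊢
    simp_all
  -- key: bags along the path between singleton bags {a}, {b} are {a} or {b}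
  have key : ∀ (a b : V), a ∈ O.sources → b ∈ O.sources →
      ((O.reach a ∩ O.reach b) \ O.reachSet (O.sources \ {a, b})).Nonempty →
      ∀ (ia ib : ι), bag ia = {a} → bag ib = {b} →
      ∀ (p : tree.Walk ia ib), p.IsPath → ∀ j ∈ p.support,
      bag j = {a} ∨ bag j = {b} := by
    rintro a b ha hb ⟨x, hx⟩ ia ib hia hib p hp j hj
    have hsub' := hcond ia j ib p hp hj
    have hxa : x ∈ O.reachSet (bag ia) := by
      rw [hia]; simpa [GraphOrientation.reachSet] using hx.1.1
    have hxb : x ∈ O.reachSet (bag ib) := by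
      rw [hib]; simpa [GraphOrientation.reachSet] using hx.1.2
    have hxj : x ∈ O.reachSet (bag j) := hsub' ⟨hxa, hxb⟩
    obtain ⟨t, ht, hxt⟩ := Set.mem_iUnion₂.mp hxj
    have htab : t ∈ ({a, b} : Set V) := by
      by_contra hct
      exact hx.2 (Set.mem_iUnion₂.mpr ⟨t, ⟨hsub j ht, hct⟩, hxt⟩)
    have hpos : 0 < (bag j).ncard := (Set.ncard_pos (Set.toFinite _)).mpr ⟨t, ht⟩
    have h1 : (bag j).ncard = 1 := le_antisymm (hsmall j) hpos
    obtain ⟨c, hc⟩ := Set.ncard_eq_one.mp h1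
    have htc : t = c := by rw [hc] at ht; exact ht
    rcases htab with h | h
    · left; rw [hc, ← htc, h]
    · right; rw [hc, ← htc, h]
  obtain ⟨i1, hi1⟩ := hmem s₁ hs1
  obtain ⟨i2, hi2⟩ := hmem s₂ hs2
  obtain ⟨i3, hi3⟩ := hmem s₃ hs3
  obtain ⟨-, hpath⟩ := SimpleGraph.isTree_iff_existsUnique_path.mp htree
  obtain ⟨P12, hP12, -⟩ := hpath i1 i2
  obtain ⟨P23, hP23, -⟩ := hpath i2 i3
  obtain ⟨P13, hP13, hP13u⟩ := hpath i1 i3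
  have hbp : (P12.append P23).bypass = P13 :=
    hP13u _ ((P12.append P23).bypass_isPath)
  have hQ3 : ¬ bag i3 = {s₁} := by
    rw [hi3]
    intro h
    exact hne13 (Set.singleton_eq_singleton_iff.mp h).symm
  obtain ⟨a, b, hQa, hQb, hedge⟩ := exists_edge_of_prop P13 (fun j => bag j = {s₁})
    (hi1) hQ3
  have hbP13 : b ∈ P13.support := SimpleGraph.Walk.snd_mem_support_of_mem_edges _ hedge
  have hbagb : bag b = {s₃} := by
    rcases key s₁ s₃ hs1 hs3 hw13 i1 i3 hi1 hi3 P13 hP13 b hbP13 with h | h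
    · exact absurd h hQb
    · exact h
  have hedge' : s(a, b) ∈ P12.edges ∨ s(a, b) ∈ P23.edges := by
    have h1 : s(a, b) ∈ (P12.append P23).bypass.edges := by rw [hbp]; exact hedge
    have h2 := (P12.append P23).edges_bypass_subset h1
    rw [SimpleGraph.Walk.edges_append, List.mem_append] at h2
    exact h2
  rcases hedge' with h | h
  · have hbP12 : b ∈ P12.support := SimpleGraph.Walk.snd_mem_support_of_mem_edges _ h
    rcases key s₁ s₂ hs1 hs2 hw12 i1 i2 hi1 hi2 P12 hP12 b hbP12 with h' | h' <;>
      rw [hbagb] at h'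
    · exact hne13 (Set.singleton_eq_singleton_iff.mp h').symm
    · exact hne23 (Set.singleton_eq_singleton_iff.mp h').symm
  · have haP23 : a ∈ P23.support := SimpleGraph.Walk.fst_mem_support_of_mem_edges _ h
    rcases key s₂ s₃ hs2 hs3 hw23 i2 i3 hi2 hi3 P23 hP23 a haP23 with h' | h' <;>
      rw [hQa] at h'
    · exact hne12 (Set.singleton_eq_singleton_iff.mp h')
    · exact hne13 (Set.singleton_eq_singleton_iff.mp h')
end

section
/- Let H be a simple graph containing an induced cycle of length r, where r ≥ 6. Then there exists an acyclic orientation H→ of H, with source set S, such that the unique reachability graph UR_S contains a triangle (three pairwise adjacent vertices). -/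
open SimpleGraph

namespace Stmt11Aux

/-- rank of a cycle vertex -/
def crank : ℕ → ℕ
  | 0 => 0
  | 1 => 1
  | 2 => 0
  | 3 => 1
  | 4 => 0
  | n + 5 => n + 1

lemma crank_le : ∀ a, crank a ≤ a
  | 0 | 1 | 2 | 3 | 4 => by simp [crank]
  | n + 5 => by simp [crank]

lemma crank_eq {a : ℕ} (h : 5 ≤ a) : crank a = a - 4 := by
  match a, h with
  | n + 5, _ => simp [crank]

lemma crank_zero_iff {a : ℕ} : crank a = 0 ↔ a = 0 ∨ a = 2 ∨ a = 4 := by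
  match a with
  | 0 | 1 | 2 | 3 | 4 => simp [crank]
  | n + 5 => simp [crank]

lemma crank_succ_lt : ∀ a, 4 ≤ a → crank a < crank (a + 1)
  | 4, _ => by simp [crank]
  | n + 5, _ => by
      show crank (n + 5) < crank (n + 1 + 5)
      simp [crank]

lemma crank_ne_succ : ∀ a, crank a ≠ crank (a + 1)
  | 0 | 1 | 2 | 3 | 4 => by simp [crank]
  | n + 5 => by
      show crank (n + 5) ≠ crank (n + 1 + 5)
      simp [crank]

/-- adjacency in the cycle graph, in terms of values -/
lemma cycle_adj_cases {r : ℕ} (hr : 6 ≤ r) {i j : Fin r}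
    (h : (cycleGraph r).Adj i j) :
    (j.val + 1 < r ∧ i.val = j.val + 1) ∨ (j.val = r - 1 ∧ i.val = 0) ∨
    (i.val + 1 < r ∧ j.val = i.val + 1) ∨ (i.val = r - 1 ∧ j.val = 0) := by
  rw [cycleGraph_adj'] at h
  rw [Fin.sub_def, Fin.sub_def] at h
  simp only at h
  have hi := i.isLt
  have hj := j.isLt
  rcases h with h | h
  · rcases Nat.lt_or_ge (r - j.val + i.val) r with hc | hc
    · rw [Nat.mod_eq_of_lt hc] at h; omega
    · rw [Nat.mod_eq_sub_mod hc, Nat.mod_eq_of_lt (by omega)] at h; omega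
  · rcases Nat.lt_or_ge (r - i.val + j.val) r with hc | hc
    · rw [Nat.mod_eq_of_lt hc] at h; omega
    · rw [Nat.mod_eq_sub_mod hc, Nat.mod_eq_of_lt (by omega)] at h; omega

lemma cycle_adj_succ {r : ℕ} (hr : 6 ≤ r) {a : ℕ} (h : a + 1 < r) :
    (cycleGraph r).Adj ⟨a + 1, h⟩ ⟨a, by omega⟩ := by
  rw [cycleGraph_adj']
  left
  rw [Fin.sub_def]
  simp only
  have : r - a + (a + 1) = r + 1 := by omega
  rw [this, Nat.add_mod_left, Nat.mod_eq_of_lt (by omega)]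

lemma cycle_adj_wrap {r : ℕ} (hr : 6 ≤ r) :
    (cycleGraph r).Adj ⟨0, by omega⟩ ⟨r - 1, by omega⟩ := by
  rw [cycleGraph_adj']
  left
  rw [Fin.sub_def]
  simp only
  have : r - (r - 1) + 0 = 1 := by omega
  rw [this, Nat.mod_eq_of_lt (by omega)]

variable {V : Type} [Fintype V] {H : SimpleGraph V} {r : ℕ}

/-- the rank function on all of `V` -/
noncomputable def myrank (e : cycleGraph r ↪g H) (v : V) : ℕ :=
  @dite _ (∃ i : Fin r, e i = v) (Classical.dec _)
    (fun h => crank (Classical.choose h).val)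
    (fun _ => r + (Fintype.equivFin V v).val)

lemma myrank_e (e : cycleGraph r ↪g H) (i : Fin r) :
    myrank e (e i) = crank i.val := by
  have h : ∃ i' : Fin r, e i' = e i := ⟨i, rfl⟩
  rw [myrank, dif_pos h]
  have := e.injective (Classical.choose_spec h)
  rw [this]

lemma myrank_ge (e : cycleGraph r ↪g H) {v : V} (h : ¬ ∃ i : Fin r, e i = v) :
    r ≤ myrank e v := by
  rw [myrank, dif_neg h]; omega

lemma mem_range_of_myrank_lt (e : cycleGraph r ↪g H) {v : V}
    (h : myrank e v < r) : ∃ i : Fin r, e i = v := by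
  by_contra hc
  exact absurd h (not_lt.mpr (myrank_ge e hc))

lemma myrank_lt (e : cycleGraph r ↪g H) (i : Fin r) : myrank e (e i) < r := by
  rw [myrank_e]
  exact lt_of_le_of_lt (crank_le _) i.isLt

lemma myrank_ne_of_adj (e : cycleGraph r ↪g H) (hr : 6 ≤ r) {u v : V}
    (h : H.Adj u v) : myrank e u ≠ myrank e v := by
  by_cases hu : ∃ i : Fin r, e i = u
  · obtain ⟨i, rfl⟩ := hu
    by_cases hv : ∃ j : Fin r, e j = v
    · obtain ⟨j, rfl⟩ := hv
      rw [e.map_adj_iff] at h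
      rw [myrank_e, myrank_e]
      rcases cycle_adj_cases hr h with ⟨h1, h2⟩ | ⟨h1, h2⟩ | ⟨h1, h2⟩ | ⟨h1, h2⟩
      · rw [h2]; exact (crank_ne_succ j.val).symm
      · rw [h1, h2, crank_eq (a := r - 1) (by omega)]
        simp [crank]; omega
      · rw [h2]; exact crank_ne_succ i.val
      · rw [h1, h2, crank_eq (a := r - 1) (by omega)]
        simp [crank]; omega
    · exact Nat.ne_of_lt (lt_of_lt_of_le (myrank_lt e i) (myrank_ge e hv))
  · by_cases hv : ∃ j : Fin r, e j = v
    · obtain ⟨j, rfl⟩ := hv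
      exact Nat.ne_of_gt (lt_of_lt_of_le (myrank_lt e j) (myrank_ge e hu))
    · have hne : u ≠ v := h.ne
      rw [myrank, dif_neg hu, myrank, dif_neg hv]
      intro hc
      exact hne ((Fintype.equivFin V).injective (Fin.ext (by omega)))

/-- the orientation -/
noncomputable def orient (e : cycleGraph r ↪g H) (hr : 6 ≤ r) :
    GraphOrientation H where
  D u v := H.Adj u v ∧ myrank e u < myrank e v
  adj_of_rel _ _ h := h.1
  rel_of_adj u v h := by
    rcases lt_or_gt_of_ne (myrank_ne_of_adj e hr h) with h' | h'
    · exact Or.inl ⟨h, h'⟩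
    · exact Or.inr ⟨h.symm, h'⟩
  acyclic v hv := by
    have key : ∀ a b : V, Relation.TransGen
        (fun u v => H.Adj u v ∧ myrank e u < myrank e v) a b →
        myrank e a < myrank e b := by
      intro a b hab
      induction hab with
      | single h => exact h.2
      | tail _ h ih => exact ih.trans h.2
    exact lt_irrefl _ (key v v hv)

lemma orient_D (e : cycleGraph r ↪g H) (hr : 6 ≤ r) {u v : V} :
    (orient e hr).D u v ↔ H.Adj u v ∧ myrank e u < myrank e v := Iff.rfl

lemma source_of_rank_zero (e : cycleGraph r ↪g H) (hr : 6 ≤ r) {s : V}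
    (h : myrank e s = 0) : s ∈ (orient e hr).sources := by
  intro u hu
  rw [orient_D] at hu
  omega

lemma rank_lt_of_transGen (e : cycleGraph r ↪g H) (hr : 6 ≤ r) {a b : V}
    (h : Relation.TransGen (orient e hr).D a b) : myrank e a < myrank e b := by
  induction h with
  | single h => exact h.2
  | tail _ h ih => exact ih.trans h.2

lemma eq_of_reach_rank_le (e : cycleGraph r ↪g H) (hr : 6 ≤ r) {a b : V}
    (h : Relation.ReflTransGen (orient e hr).D a b)
    (hrk : myrank e b ≤ myrank e a) : a = b := by
  rcases Relation.reflTransGen_iff_eq_or_transGen.mp h with rfl | h'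
  · rfl
  · exact absurd (rank_lt_of_transGen e hr h') (by omega)

lemma cycle_adj_of_succ {r : ℕ} (hr : 6 ≤ r) {a b : ℕ} (ha : a < r) (hb : b < r)
    (hab : a + 1 = b) : (cycleGraph r).Adj ⟨a, ha⟩ ⟨b, hb⟩ := by
  subst hab
  exact (cycle_adj_succ hr hb).symm

variable {V : Type} [Fintype V] {H : SimpleGraph V} {r : ℕ}

lemma D_e (e : cycleGraph r ↪g H) (hr : 6 ≤ r) {i j : Fin r}
    (hadj : (cycleGraph r).Adj i j) (hc : crank i.val < crank j.val) :
    (orient e hr).D (e i) (e j) :=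
  ⟨e.map_adj_iff.mpr hadj, by rw [myrank_e, myrank_e]; exact hc⟩

lemma source_ne (e : cycleGraph r ↪g H) (hr : 6 ≤ r) {s w u : V}
    (hs : s ∈ (orient e hr).sources) (h : (orient e hr).D u w) : s ≠ w := by
  rintro rfl
  exact hs u h

lemma in_nbr (e : cycleGraph r ↪g H) (hr : 6 ≤ r) {s : V} {j : Fin r}
    (hne : s ≠ e j) (h : Relation.ReflTransGen (orient e hr).D s (e j)) :
    ∃ i : Fin r, (cycleGraph r).Adj i j ∧ crank i.val < crank j.val ∧
      Relation.ReflTransGen (orient e hr).D s (e i) := by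
  rcases Relation.ReflTransGen.cases_tail h with heq | ⟨u, hru, hd⟩
  · exact absurd heq.symm hne
  · have hrk : myrank e u < myrank e (e j) := hd.2
    rw [myrank_e] at hrk
    have hu : ∃ i : Fin r, e i = u :=
      mem_range_of_myrank_lt e (lt_of_lt_of_le hrk
        (le_trans (le_of_lt (lt_of_le_of_lt (crank_le _) j.isLt)) (le_refl _)))
    obtain ⟨i, rfl⟩ := hu
    rw [myrank_e] at hrk
    exact ⟨i, e.map_adj_iff.mp hd.1, hrk, hru⟩

lemma reach_rank_zero (e : cycleGraph r ↪g H) (hr : 6 ≤ r) {s : V} {i : Fin r}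
    (h : Relation.ReflTransGen (orient e hr).D s (e i)) (h0 : crank i.val = 0) :
    s = e i :=
  eq_of_reach_rank_le e hr h (by rw [myrank_e, h0]; omega)

lemma chain_reach (e : cycleGraph r ↪g H) (hr : 6 ≤ r) :
    ∀ k, 4 ≤ k → ∀ (hk : k < r),
      Relation.ReflTransGen (orient e hr).D (e ⟨4, by omega⟩) (e ⟨k, hk⟩) := by
  intro k hk4
  induction k, hk4 using Nat.le_induction with
  | base => intro _; exact Relation.ReflTransGen.refl
  | succ k hk4 ih =>
    intro hk1
    have hk : k < r := by omega
    exact (ih hk).tail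
      (D_e e hr (cycle_adj_of_succ hr hk hk1 rfl) (crank_succ_lt k hk4))

lemma chain_unique (e : cycleGraph r ↪g H) (hr : 6 ≤ r) :
    ∀ k, 5 ≤ k → ∀ (hk : k < r), ∀ s ∈ (orient e hr).sources,
      Relation.ReflTransGen (orient e hr).D s (e ⟨k, hk⟩) →
      s = e ⟨4, by omega⟩ ∨ (k = r - 1 ∧ s = e ⟨0, by omega⟩) := by
  intro k
  induction k using Nat.strong_induction_on with
  | _ k IH =>
  intro hk5 hk s hs hreach
  have hcrk : crank k = k - 4 := crank_eq hk5
  have hcrk1 : crank (k - 1) < crank k := by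
    have h1 : crank (k - 1) < crank (k - 1 + 1) := crank_succ_lt _ (by omega)
    rwa [show k - 1 + 1 = k from by omega] at h1
  have hD : (orient e hr).D (e ⟨k - 1, by omega⟩) (e ⟨k, hk⟩) :=
    D_e e hr (cycle_adj_of_succ hr (by omega) hk (by omega)) hcrk1
  have hne : s ≠ e ⟨k, hk⟩ := source_ne e hr hs hD
  obtain ⟨i, hadj, hlt0, hri⟩ := in_nbr e hr hne hreach
  have hlt : crank i.val < crank k := hlt0
  rcases cycle_adj_cases hr hadj with ⟨h10, h20⟩ | ⟨h10, h20⟩ | ⟨h10, h20⟩ | ⟨h10, h20⟩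
  · -- i.val = k + 1, impossible by rank
    have h2 : i.val = k + 1 := h20
    rw [h2, crank_eq (a := k + 1) (by omega)] at hlt
    omega
  · -- k = r - 1, i.val = 0
    have h1 : k = r - 1 := h10
    have h2 : i.val = 0 := h20
    have hs0 : s = e i := reach_rank_zero e hr hri (by rw [h2]; simp [crank])
    right
    refine ⟨h1, ?_⟩
    rw [hs0]
    congr 1
    exact Fin.ext h2
  · -- k = i.val + 1
    have h1 : i.val + 1 < r := h10
    have h2 : k = i.val + 1 := h20
    by_cases hk6 : k = 5
    · -- i.val = 4
      have hs0 : s = e i := reach_rank_zero e hr hri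
        (by rw [show i.val = 4 from by omega]; simp [crank])
      left
      rw [hs0]
      congr 1
      have hv : i.val = 4 := by omega
      exact Fin.ext hv
    · -- i.val = k - 1 ≥ 5, use IH
      have hival : i.val = k - 1 := by omega
      have hi_eq : i = ⟨k - 1, by omega⟩ := Fin.ext hival
      rw [hi_eq] at hri
      rcases IH (k - 1) (by omega) (by omega) (by omega) s hs hri with h | ⟨hcon, _⟩
      · exact Or.inl h
      · omega
  · have h1 : k = 0 := h20
    omega

lemma odd_unique (e : cycleGraph r ↪g H) (hr : 6 ≤ r) (m : ℕ) (hm : m = 1 ∨ m = 3)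
    (s : V) (hs : s ∈ (orient e hr).sources)
    (h : Relation.ReflTransGen (orient e hr).D s (e ⟨m, by omega⟩)) :
    s = e ⟨m - 1, by omega⟩ ∨ s = e ⟨m + 1, by omega⟩ := by
  have hcm : crank m = 1 := by rcases hm with rfl | rfl <;> simp [crank]
  have hcm1 : crank (m - 1) = 0 := by rcases hm with rfl | rfl <;> simp [crank]
  have hD : (orient e hr).D (e ⟨m - 1, by omega⟩) (e ⟨m, by omega⟩) :=
    D_e e hr (cycle_adj_of_succ hr (by omega) (by omega) (by omega))
      (by show crank (m - 1) < crank m; omega)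
  have hne : s ≠ e ⟨m, by omega⟩ := source_ne e hr hs hD
  obtain ⟨i, hadj, hlt0, hri⟩ := in_nbr e hr hne h
  have hlt : crank i.val < crank m := hlt0
  have hc0 : crank i.val = 0 := by omega
  have hs0 : s = e i := reach_rank_zero e hr hri hc0
  rcases cycle_adj_cases hr hadj with ⟨h10, h20⟩ | ⟨h10, h20⟩ | ⟨h10, h20⟩ | ⟨h10, h20⟩
  · have h2 : i.val = m + 1 := h20
    right; rw [hs0]; congr 1; exact Fin.ext h2
  · have h1 : m = r - 1 := h10
    omega
  · have h2 : m = i.val + 1 := h20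
    left; rw [hs0]; congr 1
    have hv : i.val = m - 1 := by omega
    exact Fin.ext hv
  · have h2 : m = 0 := h20
    omega

end Stmt11Aux

open Stmt11Aux

/-- If `H` contains an induced cycle of length `r ≥ 6`, then `H`
has an acyclic orientation whose unique reachability graph (over the full source
set) contains a triangle. -/
theorem exists_orientation_urGraph_triangle {V : Type} [Fintype V] (H : SimpleGraph V)
    (r : ℕ) (hr : 6 ≤ r) (hcyc : HasInducedCycleOfLength H r) :
    ∃ (O : GraphOrientation H) (s₁ s₂ s₃ : V),
      (URGraph O O.sources).Adj s₁ s₂ ∧ (URGraph O O.sources).Adj s₂ s₃ ∧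
        (URGraph O O.sources).Adj s₁ s₃ := by
  classical
  obtain ⟨e⟩ := hcyc
  have hsrc0 : ∀ (a : ℕ) (ha : a < r), Stmt11Aux.crank a = 0 →
      e ⟨a, ha⟩ ∈ (orient e hr).sources := by
    intro a ha h0
    exact source_of_rank_zero e hr (by rw [myrank_e]; exact h0)
  have hinj : ∀ (a b : ℕ) (ha : a < r) (hb : b < r), a ≠ b →
      e ⟨a, ha⟩ ≠ e ⟨b, hb⟩ := by
    intro a b ha hb hab heq
    exact hab (congrArg Fin.val (e.injective heq))
  have hD01 : (orient e hr).D (e ⟨0, by omega⟩) (e ⟨1, by omega⟩) :=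
    D_e e hr (cycle_adj_of_succ hr (by omega) (by omega) rfl) (by simp [Stmt11Aux.crank])
  have hD21 : (orient e hr).D (e ⟨2, by omega⟩) (e ⟨1, by omega⟩) :=
    D_e e hr (cycle_adj_of_succ hr (by omega) (by omega) rfl).symm
      (by simp [Stmt11Aux.crank])
  have hD23 : (orient e hr).D (e ⟨2, by omega⟩) (e ⟨3, by omega⟩) :=
    D_e e hr (cycle_adj_of_succ hr (by omega) (by omega) rfl) (by simp [Stmt11Aux.crank])
  have hD43 : (orient e hr).D (e ⟨4, by omega⟩) (e ⟨3, by omega⟩) :=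
    D_e e hr (cycle_adj_of_succ hr (by omega) (by omega) rfl).symm
      (by simp [Stmt11Aux.crank])
  have hD0r : (orient e hr).D (e ⟨0, by omega⟩) (e ⟨r - 1, by omega⟩) :=
    D_e e hr (cycle_adj_wrap hr) (by
      show Stmt11Aux.crank 0 < Stmt11Aux.crank (r - 1)
      rw [crank_eq (a := r - 1) (by omega)]
      simp [Stmt11Aux.crank]
      omega)
  have hchain : Relation.ReflTransGen (orient e hr).D (e ⟨4, by omega⟩)
      (e ⟨r - 1, by omega⟩) := chain_reach e hr (r - 1) (by omega) (by omega)
  refine ⟨orient e hr, e ⟨0, by omega⟩, e ⟨2, by omega⟩, e ⟨4, by omega⟩, ?_, ?_, ?_⟩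
  · refine ⟨hsrc0 0 (by omega) rfl, hsrc0 2 (by omega) rfl,
      hinj 0 2 (by omega) (by omega) (by omega),
      e ⟨1, by omega⟩, ⟨Relation.ReflTransGen.single hD01,
        Relation.ReflTransGen.single hD21⟩, ?_⟩
    intro hmem
    simp only [GraphOrientation.reachSet, Set.mem_iUnion] at hmem
    obtain ⟨s, hsB, hsreach⟩ := hmem
    obtain ⟨hssrc, hsnot⟩ := hsB
    rcases odd_unique e hr 1 (Or.inl rfl) s hssrc hsreach with h | h
    · exact hsnot (Or.inl h)
    · exact hsnot (Or.inr h)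
  · refine ⟨hsrc0 2 (by omega) rfl, hsrc0 4 (by omega) rfl,
      hinj 2 4 (by omega) (by omega) (by omega),
      e ⟨3, by omega⟩, ⟨Relation.ReflTransGen.single hD23,
        Relation.ReflTransGen.single hD43⟩, ?_⟩
    intro hmem
    simp only [GraphOrientation.reachSet, Set.mem_iUnion] at hmem
    obtain ⟨s, hsB, hsreach⟩ := hmem
    obtain ⟨hssrc, hsnot⟩ := hsB
    rcases odd_unique e hr 3 (Or.inr rfl) s hssrc hsreach with h | h
    · exact hsnot (Or.inl h)
    · exact hsnot (Or.inr h)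
  · refine ⟨hsrc0 0 (by omega) rfl, hsrc0 4 (by omega) rfl,
      hinj 0 4 (by omega) (by omega) (by omega),
      e ⟨r - 1, by omega⟩, ⟨Relation.ReflTransGen.single hD0r, hchain⟩, ?_⟩
    intro hmem
    simp only [GraphOrientation.reachSet, Set.mem_iUnion] at hmem
    obtain ⟨s, hsB, hsreach⟩ := hmem
    obtain ⟨hssrc, hsnot⟩ := hsB
    rcases chain_unique e hr (r - 1) (by omega) (by omega) s hssrc hsreach
      with h | ⟨_, h⟩
    · exact hsnot (Or.inr h)
    · exact hsnot (Or.inl h)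
end
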